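/- arXiv:2005.05220 — 4 statements merged into one kernel-verified Lean document; each statement's English description precedes it below -/
import Mathlib

section
/- Let A and B be real n×n matrices satisfying A * A = -B, B * B = B, A * B = A and B * A = A. Then for every real number t, exp(t • A) = 1 - B + (cos t) • B + (sin t) • A. -/
open Matrix NormedSpace

/-- Euler-type formula for the matrix exponential: if `A * A = -B`, `B * B = B` and
`A * B = B * A = A`, then `exp (t • A) = 1 - B + cos t • B + sin t • A`. -/
theorem exp_smul_eulerLike (n : ℕ) (A B : Matrix (Fin n) (Fin n) ℝ)
    (hAA : A * A = -B) (hBB : B * B = B) (hAB : A * B = A) (hBA : B * A = A) :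
    ∀ t : ℝ, NormedSpace.exp (t • A) = 1 - B + Real.cos t • B + Real.sin t • A := by
  intro t
  letI : SeminormedRing (Matrix (Fin n) (Fin n) ℝ) := Matrix.linftyOpSemiNormedRing
  letI : NormedRing (Matrix (Fin n) (Fin n) ℝ) := Matrix.linftyOpNormedRing
  letI : NormedAlgebra ℝ (Matrix (Fin n) (Fin n) ℝ) := Matrix.linftyOpNormedAlgebra
  let f : ℂ × ℝ →+* Matrix (Fin n) (Fin n) ℝ :=
    { toFun := fun p => p.2 • (1 - B) + p.1.re • B + p.1.im • A
      map_one' := by simp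
      map_zero' := by simp
      map_add' := by
        intro p q
        simp only [Prod.fst_add, Prod.snd_add, Complex.add_re, Complex.add_im]
        module
      map_mul' := by
        intro p q
        simp only [Prod.fst_mul, Prod.snd_mul, Complex.mul_re, Complex.mul_im]
        simp only [mul_add, add_mul, smul_mul_assoc, mul_smul_comm, smul_smul,
          sub_mul, mul_sub, one_mul, mul_one, hAA, hBB, hAB, hBA, smul_neg,
          smul_sub, smul_add, sub_smul, add_smul, neg_smul]
        module }
  have hf : Continuous f := by
    show Continuous fun p : ℂ × ℝ => p.2 • (1 - B) + p.1.re • B + p.1.im • A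
    fun_prop
  have h1 : f ((t : ℂ) * Complex.I, (0 : ℝ)) = t • A := by
    simp [f]
  have h2 : exp (((t : ℂ) * Complex.I, (0 : ℝ)) : ℂ × ℝ)
      = (Complex.exp ((t : ℂ) * Complex.I), (1 : ℝ)) := by
    refine Prod.ext ?_ ?_
    · rw [Prod.fst_exp]
      rw [← Complex.exp_eq_exp_ℂ]
    · rw [Prod.snd_exp]; simp [exp_zero]
  calc exp (t • A) = exp (f ((t : ℂ) * Complex.I, (0 : ℝ))) := by rw [h1]
    _ = f (exp (((t : ℂ) * Complex.I, (0 : ℝ)) : ℂ × ℝ)) := (map_exp f hf _).symm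
    _ = f (Complex.exp ((t : ℂ) * Complex.I), (1 : ℝ)) := by rw [h2]
    _ = 1 - B + Real.cos t • B + Real.sin t • A := by
        simp [f, Complex.exp_mul_I, Complex.cos_ofReal_re, Complex.sin_ofReal_re]
end

section
/- Let θ_haar be the real 4×4 matrix (π/4) · [[0,0,-1,-1],[0,0,1,1],[0,0,0,0],[0,0,0,0]]. Then exp(θ_haar - θ_haarᵀ) = (1/2) · [[1,1,-1,-1],[1,1,1,1],[1,-1,1,-1],[1,-1,-1,1]]. -/
open Matrix NormedSpace

private lemma odd_pow_aux {A : Matrix (Fin 4) (Fin 4) ℝ} {a : ℝ}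
    (h : A ^ 3 = (-(a ^ 2)) • A) (k : ℕ) : A ^ (2 * k + 1) = ((-(a ^ 2)) ^ k) • A := by
  induction k with
  | zero => simp
  | succ n ih =>
    have e : 2 * (n + 1) + 1 = (2 * n + 1) + 2 := by ring
    rw [e, pow_add, ih, smul_mul_assoc, show A * A ^ 2 = A ^ 3 from (pow_succ' A 2).symm, h,
      smul_smul, ← pow_succ]

private lemma even_pow_aux {A : Matrix (Fin 4) (Fin 4) ℝ} {a : ℝ}
    (h : A ^ 3 = (-(a ^ 2)) • A) (k : ℕ) : A ^ (2 * k + 2) = ((-(a ^ 2)) ^ k) • A ^ 2 := by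
  have e : 2 * k + 2 = (2 * k + 1) + 1 := by ring
  rw [e, pow_succ, odd_pow_aux h k, smul_mul_assoc, ← pow_two]

set_option maxHeartbeats 1000000 in
private lemma exp_of_cube {A : Matrix (Fin 4) (Fin 4) ℝ} {a : ℝ} (ha : a ≠ 0)
    (h : A ^ 3 = (-(a ^ 2)) • A) :
    exp A = 1 + (Real.sin a / a) • A + ((1 - Real.cos a) / a ^ 2) • A ^ 2 := by
  rw [exp_eq_tsum (𝕂 := ℝ)]
  refine HasSum.tsum_eq ?_
  have hodd : HasSum (fun k : ℕ => ((Nat.factorial (2 * k + 1) : ℝ))⁻¹ • A ^ (2 * k + 1))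
      ((Real.sin a / a) • A) := by
    have hs := ((Real.hasSum_sin a).div_const a).smul_const A
    convert hs using 2 with k
    rw [odd_pow_aux h k, smul_smul]
    congr 1
    have e1 : (-(a ^ 2)) ^ k = (-1 : ℝ) ^ k * a ^ (2 * k) := by
      rw [neg_pow, ← pow_mul]
    rw [e1, pow_succ]
    field_simp
  have heven : HasSum (fun k : ℕ => ((Nat.factorial (2 * k) : ℝ))⁻¹ • A ^ (2 * k))
      (1 + ((1 - Real.cos a) / a ^ 2) • A ^ 2) := by
    have hc := Real.hasSum_cos a
    have hc1 : HasSum (fun k : ℕ =>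
        (-1 : ℝ) ^ (k + 1) * a ^ (2 * (k + 1)) / (Nat.factorial (2 * (k + 1))))
        (Real.cos a - 1) := by
      have hiff := (hasSum_nat_add_iff
        (f := fun n : ℕ => (-1 : ℝ) ^ n * a ^ (2 * n) / (Nat.factorial (2 * n))) 1
        (g := Real.cos a - 1))
      rw [Finset.range_one, Finset.sum_singleton] at hiff
      simp only [pow_zero, mul_zero, one_mul, Nat.factorial_zero, Nat.cast_one, div_one,
        mul_one] at hiff
      exact hiff.mpr (by simpa using hc)
    have hshift : HasSum (fun k : ℕ => ((Nat.factorial (2 * (k + 1)) : ℝ))⁻¹ • A ^ (2 * (k + 1)))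
        (((1 - Real.cos a) / a ^ 2) • A ^ 2) := by
      have hs := ((hc1.neg.div_const (a ^ 2)).smul_const (A ^ 2))
      convert hs using 2 with k
      · rw [show 2 * (k + 1) = 2 * k + 2 by ring, even_pow_aux h k, smul_smul]
        congr 1
        have e1 : (-(a ^ 2)) ^ k = -((-1 : ℝ) ^ (k + 1) * a ^ (2 * k)) := by
          rw [neg_pow, ← pow_mul, pow_succ]; ring
        rw [e1]
        have e2 : a ^ (2 * (k + 1)) = a ^ (2 * k) * a ^ 2 := by rw [← pow_add]; ring_nf
        rw [show 2 * k + 2 = 2 * (k + 1) by ring, e2]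
        have ha2 : (a : ℝ) ^ 2 ≠ 0 := pow_ne_zero 2 ha
        field_simp
      · rw [neg_sub]
    have hg := (hasSum_nat_add_iff
      (f := fun k : ℕ => ((Nat.factorial (2 * k) : ℝ))⁻¹ • A ^ (2 * k)) 1).mp
      (by simpa using hshift)
    rw [Finset.range_one, Finset.sum_singleton] at hg
    simpa [add_comm] using hg
  have hsum := HasSum.even_add_odd (f := fun n : ℕ => ((Nat.factorial n : ℝ))⁻¹ • A ^ n)
    heven hodd
  convert hsum using 1
  · rfl
  abel

set_option maxHeartbeats 1000000 in
/-- The 2D Haar transform matrix is the exponential of the skew-symmetric part of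
`θ_haar = (π/4) · [[0,0,-1,-1],[0,0,1,1],[0,0,0,0],[0,0,0,0]]`. -/
theorem exp_skew_theta_haar :
    exp ((Real.pi / 4) • !![(0 : ℝ), 0, -1, -1; 0, 0, 1, 1; 0, 0, 0, 0; 0, 0, 0, 0]
        - ((Real.pi / 4) • !![(0 : ℝ), 0, -1, -1; 0, 0, 1, 1; 0, 0, 0, 0; 0, 0, 0, 0])ᵀ)
      = (1 / 2 : ℝ) • !![(1 : ℝ), 1, -1, -1; 1, 1, 1, 1; 1, -1, 1, -1; 1, -1, -1, 1] := by
  have hpi : (Real.pi / 2) ≠ 0 := by positivity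
  have hA : (Real.pi / 4) • !![(0 : ℝ), 0, -1, -1; 0, 0, 1, 1; 0, 0, 0, 0; 0, 0, 0, 0]
        - ((Real.pi / 4) • !![(0 : ℝ), 0, -1, -1; 0, 0, 1, 1; 0, 0, 0, 0; 0, 0, 0, 0])ᵀ
      = (Real.pi / 4) • !![(0 : ℝ), 0, -1, -1; 0, 0, 1, 1; 1, -1, 0, 0; 1, -1, 0, 0] := by
    ext i j
    fin_cases i <;> fin_cases j <;>
      simp [Matrix.sub_apply, Matrix.transpose_apply, Matrix.cons_val', Matrix.cons_val_zero,
        Matrix.cons_val_one, Matrix.head_cons, Matrix.head_fin_const, Matrix.empty_val',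
        Matrix.cons_val_fin_one, Matrix.vecHead, Matrix.vecTail]
  have hM3 : (!![(0 : ℝ), 0, -1, -1; 0, 0, 1, 1; 1, -1, 0, 0; 1, -1, 0, 0]) ^ 3
      = (-4 : ℝ) • !![(0 : ℝ), 0, -1, -1; 0, 0, 1, 1; 1, -1, 0, 0; 1, -1, 0, 0] := by
    rw [pow_succ, pow_two]
    ext i j
    fin_cases i <;> fin_cases j <;>
      simp [Matrix.mul_apply, Fin.sum_univ_four, Matrix.cons_val', Matrix.cons_val_zero,
        Matrix.cons_val_one, Matrix.head_cons, Matrix.head_fin_const, Matrix.empty_val',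
        Matrix.cons_val_fin_one, Matrix.vecHead, Matrix.vecTail] <;> norm_num
  have hA3 : ((Real.pi / 4) • !![(0 : ℝ), 0, -1, -1; 0, 0, 1, 1; 1, -1, 0, 0; 1, -1, 0, 0]) ^ 3
      = (-((Real.pi / 2) ^ 2)) •
        ((Real.pi / 4) • !![(0 : ℝ), 0, -1, -1; 0, 0, 1, 1; 1, -1, 0, 0; 1, -1, 0, 0]) := by
    rw [smul_pow, hM3, smul_smul, smul_smul]
    congr 1
    ring
  rw [hA, exp_of_cube hpi hA3, Real.sin_pi_div_two, Real.cos_pi_div_two]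
  rw [smul_pow, smul_smul, smul_smul]
  have h2 : (1 / (Real.pi / 2)) * (Real.pi / 4) = 1 / 2 := by
    have := Real.pi_ne_zero; field_simp; ring
  have h4 : ((1 - 0) / (Real.pi / 2) ^ 2) * (Real.pi / 4) ^ 2 = 1 / 4 := by
    have := Real.pi_ne_zero; field_simp; ring
  rw [h2, h4, pow_two]
  ext i j
  fin_cases i <;> fin_cases j <;>
    simp [Matrix.mul_apply, Fin.sum_univ_four, Matrix.one_apply, Matrix.add_apply,
      Matrix.cons_val', Matrix.cons_val_zero, Matrix.cons_val_one, Matrix.head_cons,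
      Matrix.head_fin_const, Matrix.empty_val', Matrix.cons_val_fin_one, Matrix.vecHead,
      Matrix.vecTail] <;> norm_num
end

section
/- Let S, H, K be real n×n matrices and let exp denote the matrix exponential on real n×n matrices. Denote by Dexp(S) : Matrix → Matrix the Fréchet derivative of exp at S (i.e. fderiv ℝ exp S). Then with respect to the Frobenius inner product ⟨X, Y⟩ = trace(Xᵀ * Y), the adjoint of Dexp(S) is Dexp(Sᵀ): for all H, K, trace((Dexp(S) H)ᵀ * K) = trace(Hᵀ * (Dexp(Sᵀ) K)). -/
open Matrix NormedSpace

attribute [local instance] Matrix.frobeniusNormedAddCommGroup Matrix.frobeniusNormedSpace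
attribute [local instance 100] Matrix.frobeniusNormedRing Matrix.frobeniusNormedAlgebra

section frob

/-- The Frobenius topology, so that the topology on matrices is the one of the norm. -/
@[reducible] noncomputable def frobTop (n : ℕ) : TopologicalSpace (Matrix (Fin n) (Fin n) ℝ) :=
  @UniformSpace.toTopologicalSpace _ (@PseudoMetricSpace.toUniformSpace _
    (@SeminormedAddCommGroup.toPseudoMetricSpace _
      (@NormedAddCommGroup.toSeminormedAddCommGroup _ Matrix.frobeniusNormedAddCommGroup)))

attribute [local instance 2000] frobTop

variable {n : ℕ}

/-- The candidate derivative of `Y ↦ Y ^ k` at `X`. -/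
noncomputable def Dpow (n k : ℕ) (X : Matrix (Fin n) (Fin n) ℝ) :
    Matrix (Fin n) (Fin n) ℝ →L[ℝ] Matrix (Fin n) (Fin n) ℝ :=
  ∑ i ∈ Finset.range k,
    (ContinuousLinearMap.mul ℝ _ (X ^ i)).comp
      ((ContinuousLinearMap.mul ℝ (Matrix (Fin n) (Fin n) ℝ)).flip (X ^ (k - 1 - i)))

theorem Dpow_apply (k : ℕ) (X H : Matrix (Fin n) (Fin n) ℝ) :
    Dpow n k X H = ∑ i ∈ Finset.range k, X ^ i * H * X ^ (k - 1 - i) := by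
  simp [Dpow, ContinuousLinearMap.sum_apply, mul_assoc]

theorem hasFDerivAt_pow'' (k : ℕ) (X : Matrix (Fin n) (Fin n) ℝ) :
    HasFDerivAt (fun Y : Matrix (Fin n) (Fin n) ℝ => Y ^ k) (Dpow n k X) X := by
  induction k with
  | zero => simpa [Dpow] using hasFDerivAt_const (1 : Matrix (Fin n) (Fin n) ℝ) X
  | succ k ih =>
      have key : Dpow n (k + 1) X
          = X ^ k • ContinuousLinearMap.id ℝ (Matrix (Fin n) (Fin n) ℝ)
            + (Dpow n k X).smulRight X := by
        refine ContinuousLinearMap.ext fun H => ?_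
        rw [Dpow_apply, ContinuousLinearMap.add_apply, ContinuousLinearMap.smul_apply,
          ContinuousLinearMap.smulRight_apply, ContinuousLinearMap.coe_id', id_eq,
          Dpow_apply, smul_eq_mul, smul_eq_mul, Finset.sum_range_succ, Finset.sum_mul,
          add_comm]
        congr 1
        · have : k + 1 - 1 - k = 0 := by omega
          rw [this, pow_zero, mul_one]
        · refine Finset.sum_congr rfl fun i hi => ?_
          have hik : i < k := Finset.mem_range.mp hi
          have h1 : k + 1 - 1 - i = k - 1 - i + 1 := by omega
          rw [h1, pow_succ]
          simp [mul_assoc]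
      rw [key]
      simp only [pow_succ]
      exact ih.mul' (hasFDerivAt_id X)

theorem norm_pow_le_aux (Y : Matrix (Fin n) (Fin n) ℝ) (m : ℕ) :
    ‖Y ^ m‖ ≤ (1 + ‖(1 : Matrix (Fin n) (Fin n) ℝ)‖) * ‖Y‖ ^ m := by
  cases m with
  | zero => simp
  | succ m =>
      calc ‖Y ^ (m+1)‖ ≤ ‖Y‖ ^ (m+1) := norm_pow_le' Y m.succ_pos
      _ ≤ _ := le_mul_of_one_le_left (by positivity)
        (by linarith [norm_nonneg (1 : Matrix (Fin n) (Fin n) ℝ)])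

theorem norm_Dpow_le (k : ℕ) (Y : Matrix (Fin n) (Fin n) ℝ) {R : ℝ} (hY : ‖Y‖ ≤ R) :
    ‖Dpow n k Y‖ ≤ k * ((1 + ‖(1 : Matrix (Fin n) (Fin n) ℝ)‖) ^ 2 * R ^ (k - 1)) := by
  set B := 1 + ‖(1 : Matrix (Fin n) (Fin n) ℝ)‖ with hB
  have hB1 : (1:ℝ) ≤ B := by rw [hB]; linarith [norm_nonneg (1 : Matrix (Fin n) (Fin n) ℝ)]
  have hR : 0 ≤ R := le_trans (norm_nonneg Y) hY
  calc ‖Dpow n k Y‖ ≤ ∑ i ∈ Finset.range k,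
      ‖(ContinuousLinearMap.mul ℝ (Matrix (Fin n) (Fin n) ℝ) (Y ^ i)).comp
        ((ContinuousLinearMap.mul ℝ (Matrix (Fin n) (Fin n) ℝ)).flip (Y ^ (k - 1 - i)))‖ :=
        norm_sum_le _ _
    _ ≤ ∑ i ∈ Finset.range k, B ^ 2 * R ^ (k - 1) := by
        refine Finset.sum_le_sum fun i hi => ?_
        have hik : i < k := Finset.mem_range.mp hi
        have h1 : ‖ContinuousLinearMap.mul ℝ (Matrix (Fin n) (Fin n) ℝ) (Y ^ i)‖ ≤ ‖Y ^ i‖ :=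
          ContinuousLinearMap.opNorm_mul_apply_le ℝ _ _
        have h2 : ‖(ContinuousLinearMap.mul ℝ (Matrix (Fin n) (Fin n) ℝ)).flip (Y ^ (k - 1 - i))‖
            ≤ ‖Y ^ (k - 1 - i)‖ := by
          refine ContinuousLinearMap.opNorm_le_bound _ (norm_nonneg _) fun c => ?_
          rw [ContinuousLinearMap.flip_apply, ContinuousLinearMap.mul_apply',
            mul_comm ‖Y ^ (k - 1 - i)‖]
          exact norm_mul_le _ _
        refine le_trans (ContinuousLinearMap.opNorm_comp_le _ _) ?_
        have hYi := norm_pow_le_aux Y i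
        have hYj := norm_pow_le_aux Y (k - 1 - i)
        have := mul_le_mul (le_trans h1 hYi) (le_trans h2 hYj) (norm_nonneg _)
          (by positivity)
        refine le_trans this ?_
        have hij : i + (k - 1 - i) = k - 1 := by omega
        calc B * ‖Y‖ ^ i * (B * ‖Y‖ ^ (k - 1 - i))
              = B ^ 2 * (‖Y‖ ^ i * ‖Y‖ ^ (k - 1 - i)) := by ring
          _ = B ^ 2 * ‖Y‖ ^ (k - 1) := by rw [← pow_add, hij]
          _ ≤ B ^ 2 * R ^ (k - 1) := by
              have := pow_le_pow_left₀ (norm_nonneg Y) hY (k - 1)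
              nlinarith [sq_nonneg B]
    _ = k * (B ^ 2 * R ^ (k - 1)) := by simp [Finset.sum_const, mul_comm]

theorem summable_aux (C R : ℝ) :
    Summable (fun (k : ℕ) => (k.factorial : ℝ)⁻¹ * ((k : ℝ) * (C * R ^ (k - 1)))) := by
  rw [← summable_nat_add_iff 1]
  have : (fun (k : ℕ) => ((k+1).factorial : ℝ)⁻¹ * (((k:ℝ)+1) * (C * R ^ (k + 1 - 1))))
      = fun (k : ℕ) => C * (R ^ k / k.factorial) := by
    funext k
    have h1 : ((k + 1).factorial : ℝ) = (k + 1) * k.factorial := by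
      push_cast [Nat.factorial_succ]; ring
    have h2 : ((k.factorial : ℝ)) ≠ 0 := Nat.cast_ne_zero.mpr k.factorial_ne_zero
    have h3 : ((k:ℝ) + 1) ≠ 0 := by positivity
    simp only [h1, Nat.add_sub_cancel]
    field_simp
  simp only [Nat.cast_add, Nat.cast_one] at this ⊢
  rw [this]
  exact (Real.summable_pow_div_factorial R).mul_left _

theorem summable_Dpow (X : Matrix (Fin n) (Fin n) ℝ) :
    Summable (fun (k : ℕ) => (k.factorial : ℝ)⁻¹ • Dpow n k X) := by
  refine Summable.of_norm_bounded
    (summable_aux ((1 + ‖(1 : Matrix (Fin n) (Fin n) ℝ)‖) ^ 2) ‖X‖) fun k => ?_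
  have hle := _root_.norm_smul_le ((k.factorial : ℝ))⁻¹ (Dpow n k X)
  refine le_trans hle ?_
  rw [norm_inv, Real.norm_natCast]
  exact mul_le_mul_of_nonneg_left (norm_Dpow_le k X le_rfl) (by positivity)

theorem hasFDerivAt_matrix_exp (X : Matrix (Fin n) (Fin n) ℝ) :
    HasFDerivAt (exp : Matrix (Fin n) (Fin n) ℝ → Matrix (Fin n) (Fin n) ℝ)
      (∑' (k : ℕ), ((k.factorial : ℝ))⁻¹ • Dpow n k X) X := by
  set B := 1 + ‖(1 : Matrix (Fin n) (Fin n) ℝ)‖ with hB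
  set R : ℝ := ‖X‖ + 1 with hR
  have hRpos : 0 < R := by positivity
  set u : ℕ → ℝ := fun k => (k.factorial : ℝ)⁻¹ * (k * (B ^ 2 * R ^ (k - 1))) with hu_def
  have hu : Summable u := summable_aux _ _
  have hf : ∀ (k : ℕ) (Y : Matrix (Fin n) (Fin n) ℝ), Y ∈ Metric.ball (0:Matrix (Fin n) (Fin n) ℝ) R →
      HasFDerivAt (fun Z : Matrix (Fin n) (Fin n) ℝ => (k.factorial : ℝ)⁻¹ • Z ^ k)
        ((k.factorial : ℝ)⁻¹ • Dpow n k Y) Y := fun k Y _ => (hasFDerivAt_pow'' k Y).fun_const_smul _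
  have hf' : ∀ (k : ℕ) (Y : Matrix (Fin n) (Fin n) ℝ), Y ∈ Metric.ball (0:Matrix (Fin n) (Fin n) ℝ) R →
      ‖(k.factorial : ℝ)⁻¹ • Dpow n k Y‖ ≤ u k := by
    intro k Y hY
    rw [mem_ball_zero_iff] at hY
    have hle := _root_.norm_smul_le ((k.factorial : ℝ))⁻¹ (Dpow n k Y)
    have := norm_Dpow_le (n := n) k Y hY.le
    refine le_trans hle ?_
    rw [hu_def, norm_inv, Real.norm_natCast]
    exact mul_le_mul_of_nonneg_left this (by positivity)
  have hx : X ∈ Metric.ball (0:Matrix (Fin n) (Fin n) ℝ) R := by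
    rw [mem_ball_zero_iff]; simp [hR]
  have hf0 : Summable fun (k : ℕ) => (k.factorial : ℝ)⁻¹ • X ^ k := expSeries_summable' (𝕂 := ℝ) X
  have H := hasFDerivAt_tsum_of_isPreconnected hu Metric.isOpen_ball
    (convex_ball (0:Matrix (Fin n) (Fin n) ℝ) R).isPreconnected hf hf' hx hf0 hx
  rw [exp_eq_tsum (𝕂 := ℝ)]
  exact H

/-- `M ↦ trace (Mᵀ * K)` as a continuous linear map. -/
noncomputable def trFormL (n : ℕ) (K : Matrix (Fin n) (Fin n) ℝ) :
    Matrix (Fin n) (Fin n) ℝ →L[ℝ] ℝ :=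
  LinearMap.toContinuousLinearMap
    { toFun := fun M => (Mᵀ * K).trace
      map_add' := by intro A B; simp [Matrix.transpose_add, Matrix.add_mul]
      map_smul' := by intro c A; simp [Matrix.transpose_smul, Matrix.smul_mul] }

/-- `M ↦ trace (Hᵀ * M)` as a continuous linear map. -/
noncomputable def trFormR (n : ℕ) (H : Matrix (Fin n) (Fin n) ℝ) :
    Matrix (Fin n) (Fin n) ℝ →L[ℝ] ℝ :=
  LinearMap.toContinuousLinearMap
    { toFun := fun M => (Hᵀ * M).trace
      map_add' := by intro A B; simp [Matrix.mul_add]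
      map_smul' := by intro c A; simp [Matrix.mul_smul] }

theorem term_eq (S H K : Matrix (Fin n) (Fin n) ℝ) (i j : ℕ) :
    ((S ^ i * H * S ^ j)ᵀ * K).trace = (Hᵀ * (Sᵀ ^ i * K * Sᵀ ^ j)).trace := by
  calc ((S ^ i * H * S ^ j)ᵀ * K).trace
      = (Sᵀ ^ j * (Hᵀ * (Sᵀ ^ i * K))).trace := by
        rw [Matrix.transpose_mul, Matrix.transpose_mul, Matrix.transpose_pow,
          Matrix.transpose_pow, mul_assoc, mul_assoc]
    _ = ((Hᵀ * (Sᵀ ^ i * K)) * Sᵀ ^ j).trace := Matrix.trace_mul_comm _ _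
    _ = (Hᵀ * (Sᵀ ^ i * K * Sᵀ ^ j)).trace := by simp only [mul_assoc]

theorem fderiv_matrix_exp_adjoint_aux (n : ℕ) (S : Matrix (Fin n) (Fin n) ℝ) :
    ∀ H K : Matrix (Fin n) (Fin n) ℝ,
      ((fderiv ℝ (exp : Matrix (Fin n) (Fin n) ℝ → Matrix (Fin n) (Fin n) ℝ) S H)ᵀ * K).trace
        = (Hᵀ *
            (fderiv ℝ (exp : Matrix (Fin n) (Fin n) ℝ → Matrix (Fin n) (Fin n) ℝ) Sᵀ K)).trace := by
  intro H K
  rw [(hasFDerivAt_matrix_exp (n := n) S).fderiv, (hasFDerivAt_matrix_exp (n := n) Sᵀ).fderiv]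
  have sumS := summable_Dpow (n := n) S
  have sumT := summable_Dpow (n := n) Sᵀ
  -- push everything through continuous linear maps
  have e1 : ((trFormL n K).comp (ContinuousLinearMap.apply ℝ (Matrix (Fin n) (Fin n) ℝ) H))
      (∑' (k : ℕ), (k.factorial : ℝ)⁻¹ • Dpow n k S)
      = ∑' (k : ℕ), ((trFormL n K).comp (ContinuousLinearMap.apply ℝ (Matrix (Fin n) (Fin n) ℝ) H))
          ((k.factorial : ℝ)⁻¹ • Dpow n k S) :=
    ContinuousLinearMap.map_tsum _ sumS
  have e2 : ((trFormR n H).comp (ContinuousLinearMap.apply ℝ (Matrix (Fin n) (Fin n) ℝ) K))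
      (∑' (k : ℕ), (k.factorial : ℝ)⁻¹ • Dpow n k Sᵀ)
      = ∑' (k : ℕ), ((trFormR n H).comp (ContinuousLinearMap.apply ℝ (Matrix (Fin n) (Fin n) ℝ) K))
          ((k.factorial : ℝ)⁻¹ • Dpow n k Sᵀ) :=
    ContinuousLinearMap.map_tsum _ sumT
  simp only [ContinuousLinearMap.comp_apply, ContinuousLinearMap.apply_apply] at e1 e2
  have hL : ∀ M, trFormL n K M = (Mᵀ * K).trace := fun M => rfl
  have hR : ∀ M, trFormR n H M = (Hᵀ * M).trace := fun M => rfl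
  calc (((∑' (k : ℕ), (k.factorial : ℝ)⁻¹ • Dpow n k S) H)ᵀ * K).trace
      = trFormL n K ((∑' (k : ℕ), (k.factorial : ℝ)⁻¹ • Dpow n k S) H) := rfl
    _ = ∑' (k : ℕ), trFormL n K (((k.factorial : ℝ)⁻¹ • Dpow n k S) H) := e1
    _ = ∑' (k : ℕ), trFormR n H (((k.factorial : ℝ)⁻¹ • Dpow n k Sᵀ) K) := by
        refine tsum_congr fun k => ?_
        rw [ContinuousLinearMap.smul_apply, ContinuousLinearMap.smul_apply,
          _root_.map_smul, _root_.map_smul, hL, hR, Dpow_apply, Dpow_apply]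
        congr 1
        rw [Matrix.transpose_sum, Finset.sum_mul, Matrix.trace_sum, Finset.mul_sum,
          Matrix.trace_sum]
        exact Finset.sum_congr rfl fun i _ => term_eq S H K i (k - 1 - i)
    _ = trFormR n H ((∑' (k : ℕ), (k.factorial : ℝ)⁻¹ • Dpow n k Sᵀ) K) := e2.symm
    _ = (Hᵀ * ((∑' (k : ℕ), (k.factorial : ℝ)⁻¹ • Dpow n k Sᵀ) K)).trace := rfl

end frob

/-- With respect to the Frobenius inner product `⟨X, Y⟩ = trace (Xᵀ * Y)`, the adjoint of
the Fréchet derivative of the matrix exponential at `S` is its Fréchet derivative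
at `Sᵀ`. -/
theorem fderiv_matrix_exp_adjoint (n : ℕ) (S : Matrix (Fin n) (Fin n) ℝ) :
    ∀ H K : Matrix (Fin n) (Fin n) ℝ,
      ((fderiv ℝ (exp : Matrix (Fin n) (Fin n) ℝ → Matrix (Fin n) (Fin n) ℝ) S H)ᵀ * K).trace
        = (Hᵀ *
            (fderiv ℝ (exp : Matrix (Fin n) (Fin n) ℝ → Matrix (Fin n) (Fin n) ℝ) Sᵀ K)).trace := by
  intro H K
  exact fderiv_matrix_exp_adjoint_aux n S H K
end

section
/- Let S, H be real n×n matrices and define the sequence M : ℕ → Matrix by M 1 = H and M k = M (k-1) * S + S^(k-1) * H for k ≥ 2. Then the series ∑_{k=1}^∞ (1/k!) • M k converges, and the Fréchet derivative of the matrix exponential at S applied to H equals its sum: (fderiv ℝ exp S) H = ∑_{k=1}^∞ (1/k!) • M k. -/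
open Matrix NormedSpace

attribute [local instance] Matrix.frobeniusNormedAddCommGroup Matrix.frobeniusNormedSpace
attribute [local instance] Matrix.frobeniusNormedRing Matrix.frobeniusNormedAlgebra

noncomputable instance matCLMNormedAddCommGroup (n : ℕ) :
    NormedAddCommGroup (Matrix (Fin n) (Fin n) ℝ →L[ℝ] Matrix (Fin n) (Fin n) ℝ) :=
  ContinuousLinearMap.toNormedAddCommGroup

noncomputable instance matCLMNormedSpace (n : ℕ) :
    NormedSpace ℝ (Matrix (Fin n) (Fin n) ℝ →L[ℝ] Matrix (Fin n) (Fin n) ℝ) :=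
  ContinuousLinearMap.toNormedSpace

noncomputable instance matCLMCompleteSpace (n : ℕ) :
    CompleteSpace (Matrix (Fin n) (Fin n) ℝ →L[ℝ] Matrix (Fin n) (Fin n) ℝ) :=
  haveI : SequentialSpace (Matrix (Fin n) (Fin n) ℝ) :=
    (inferInstance : SequentialSpace (Fin n → Fin n → ℝ))
  ContinuousLinearMap.instCompleteSpace

set_option maxHeartbeats 2000000

/-- The derivative of `x ↦ x ^ k` at `x`, as a continuous linear map. -/
noncomputable def Lmap (n : ℕ) : ℕ → Matrix (Fin n) (Fin n) ℝ →
    (Matrix (Fin n) (Fin n) ℝ →L[ℝ] Matrix (Fin n) (Fin n) ℝ)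
  | 0, _ => 0
  | (k + 1), x => x ^ k • ContinuousLinearMap.id ℝ _ + (Lmap n k x).smulRight x

theorem Lmap_hasFDerivAt (n k : ℕ) (x : Matrix (Fin n) (Fin n) ℝ) :
    HasFDerivAt (fun y => y ^ k) (Lmap n k x) x := by
  induction k with
  | zero =>
    simp only [pow_zero, Lmap]
    exact hasFDerivAt_const 1 x
  | succ k ih =>
    simp only [pow_succ, Lmap]
    exact ih.mul' (hasFDerivAt_id x)

theorem Lmap_succ_apply (n k : ℕ) (x H : Matrix (Fin n) (Fin n) ℝ) :
    Lmap n (k + 1) x H = x ^ k * H + (Lmap n k x H) * x := by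
  simp [Lmap, smul_eq_mul]

theorem Lmap_apply_norm_le (n : ℕ) (r : ℝ) (hr : 1 ≤ r) (x : Matrix (Fin n) (Fin n) ℝ)
    (hx : ‖x‖ ≤ r) (k : ℕ) (H : Matrix (Fin n) (Fin n) ℝ) :
    ‖Lmap n k x H‖ ≤ (k * r ^ k) * ‖H‖ := by
  have hr0 : (0:ℝ) ≤ r := le_trans zero_le_one hr
  have hpow : ∀ m : ℕ, ∀ G : Matrix (Fin n) (Fin n) ℝ, ‖x ^ m * G‖ ≤ r ^ m * ‖G‖ := by
    intro m
    induction m with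
    | zero => intro G; simp
    | succ m ih =>
      intro G
      have : x ^ (m + 1) * G = x * (x ^ m * G) := by rw [pow_succ', mul_assoc]
      rw [this]
      calc ‖x * (x ^ m * G)‖ ≤ ‖x‖ * ‖x ^ m * G‖ := norm_mul_le _ _
        _ ≤ r * (r ^ m * ‖G‖) := by
            apply mul_le_mul hx (ih G) (norm_nonneg _) hr0
        _ = r ^ (m + 1) * ‖G‖ := by ring
  induction k with
  | zero => simp [Lmap]
  | succ k ih =>
    rw [Lmap_succ_apply]
    calc ‖x ^ k * H + Lmap n k x H * x‖ ≤ ‖x ^ k * H‖ + ‖Lmap n k x H * x‖ := norm_add_le _ _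
      _ ≤ r ^ k * ‖H‖ + ‖Lmap n k x H‖ * ‖x‖ :=
          add_le_add (hpow k H) (norm_mul_le _ _)
      _ ≤ r ^ k * ‖H‖ + ((k * r ^ k) * ‖H‖) * r := by
          gcongr
      _ ≤ r ^ (k+1) * ‖H‖ + ((k * r ^ (k+1)) * ‖H‖) := by
          have h1 : r ^ k ≤ r ^ (k + 1) := pow_le_pow_right₀ hr (Nat.le_succ k)
          have h2 : ((k : ℝ) * r ^ k * ‖H‖) * r = (k : ℝ) * r ^ (k+1) * ‖H‖ := by ring
          rw [h2]
          gcongr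
      _ = ((k + 1 : ℕ) * r ^ (k+1)) * ‖H‖ := by push_cast; ring

theorem Lmap_norm_le (n : ℕ) (r : ℝ) (hr : 1 ≤ r) (x : Matrix (Fin n) (Fin n) ℝ)
    (hx : ‖x‖ ≤ r) (k : ℕ) : ‖Lmap n k x‖ ≤ k * r ^ k := by
  apply ContinuousLinearMap.opNorm_le_bound
  · positivity
  · exact Lmap_apply_norm_le n r hr x hx k

/-- Series representation of the Fréchet derivative of the matrix exponential: with
`M 1 = H` and `M k = M (k-1) * S + S^(k-1) * H` for `k ≥ 2`, the series
`∑_{k=1}^∞ (1/k!) • M k` converges to `(fderiv ℝ exp S) H`. -/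
theorem fderiv_matrix_exp_series (n : ℕ) (S H : Matrix (Fin n) (Fin n) ℝ)
    (M : ℕ → Matrix (Fin n) (Fin n) ℝ) (hM1 : M 1 = H)
    (hMk : ∀ k, 2 ≤ k → M k = M (k - 1) * S + S ^ (k - 1) * H) :
    HasSum (fun k : ℕ => (((k + 1).factorial : ℝ))⁻¹ • M (k + 1))
      (fderiv ℝ (exp : Matrix (Fin n) (Fin n) ℝ → Matrix (Fin n) (Fin n) ℝ) S H) := by
  classical
  set r : ℝ := max ‖S‖ 1 + 1 with hrdef
  have hr1 : 1 ≤ r := by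
    have := le_max_right ‖S‖ 1
    simp only [hrdef]; linarith
  have hSr : ‖S‖ < r := by
    have := le_max_left ‖S‖ 1
    simp only [hrdef]; linarith
  set f : ℕ → Matrix (Fin n) (Fin n) ℝ → Matrix (Fin n) (Fin n) ℝ :=
    fun k y => (k.factorial : ℝ)⁻¹ • y ^ k with hf
  set f' : ℕ → Matrix (Fin n) (Fin n) ℝ →
      (Matrix (Fin n) (Fin n) ℝ →L[ℝ] Matrix (Fin n) (Fin n) ℝ) :=
    fun k y => (k.factorial : ℝ)⁻¹ • Lmap n k y with hf'
  set u : ℕ → ℝ := fun k => (k.factorial : ℝ)⁻¹ * (k * r ^ k) with hu_def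
  have hnorm : ∀ (k : ℕ) (x : Matrix (Fin n) (Fin n) ℝ), ‖x‖ ≤ r → ‖f' k x‖ ≤ u k := by
    intro k x hx'
    apply ContinuousLinearMap.opNorm_le_bound
    · positivity
    · intro G
      have h1 : f' k x G = (k.factorial : ℝ)⁻¹ • (Lmap n k x G) := rfl
      change ‖(k.factorial : ℝ)⁻¹ • (Lmap n k x G)‖ ≤ u k * ‖G‖
      rw [norm_smul, Real.norm_eq_abs, abs_of_nonneg (by positivity : (0:ℝ) ≤ (k.factorial : ℝ)⁻¹)]
      calc (k.factorial : ℝ)⁻¹ * ‖Lmap n k x G‖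
          ≤ (k.factorial : ℝ)⁻¹ * ((k * r ^ k) * ‖G‖) := by
            gcongr
            exact Lmap_apply_norm_le n r hr1 x hx' k G
        _ = ((k.factorial : ℝ)⁻¹ * (k * r ^ k)) * ‖G‖ := by ring
  have hu : Summable u := by
    rw [← summable_nat_add_iff 1]
    have : (fun k => u (k + 1)) = fun k => r * (r ^ k / (k.factorial : ℝ)) := by
      funext k
      have hk : ((k + 1).factorial : ℝ) = (k + 1) * (k.factorial : ℝ) := by
        rw [Nat.factorial_succ]; push_cast; ring
      simp only [hu_def, hk]
      have h1 : ((k : ℝ) + 1) ≠ 0 := by positivity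
      have h2 : (k.factorial : ℝ) ≠ 0 := Nat.cast_ne_zero.mpr k.factorial_ne_zero
      push_cast
      field_simp
      ring
    rw [this]
    exact (Real.summable_pow_div_factorial r).mul_left r
  have key : HasFDerivAt (fun y => ∑' k, f k y) (∑' k, f' k S) S := by
    apply hasFDerivAt_tsum_of_isPreconnected hu Metric.isOpen_ball
      (convex_ball (0 : Matrix (Fin n) (Fin n) ℝ) r).isPreconnected
      (fun k x _ => (Lmap_hasFDerivAt n k x).const_smul _)
      (fun k x hx => hnorm k x (le_of_lt (by simpa using hx)))
      (by simpa using hSr)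
      (expSeries_summable' (𝕂 := ℝ) S) (by simpa using hSr)
  have hexp : (fun y : Matrix (Fin n) (Fin n) ℝ => ∑' k, f k y) = exp := by
    funext y
    rw [exp_eq_tsum ℝ]
  rw [hexp] at key
  have hfd : fderiv ℝ (exp : Matrix (Fin n) (Fin n) ℝ → Matrix (Fin n) (Fin n) ℝ) S
      = ∑' k, f' k S := key.fderiv
  have hsum : Summable fun k => f' k S := by
    apply @Summable.of_norm _ _ _ (matCLMCompleteSpace n)
    exact Summable.of_nonneg_of_le (fun k => norm_nonneg _)
      (fun k => hnorm k S (le_of_lt hSr)) hu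
  have h1 : HasSum (fun k => f' k S)
      (fderiv ℝ (exp : Matrix (Fin n) (Fin n) ℝ → Matrix (Fin n) (Fin n) ℝ) S) := by
    rw [hfd]; exact hsum.hasSum
  have h2 : HasSum (fun k => f' k S H)
      (fderiv ℝ (exp : Matrix (Fin n) (Fin n) ℝ → Matrix (Fin n) (Fin n) ℝ) S H) := by
    have := (ContinuousLinearMap.apply ℝ (Matrix (Fin n) (Fin n) ℝ) H).hasSum h1
    exact this
  have hLM : ∀ k : ℕ, Lmap n (k + 1) S H = M (k + 1) := by
    intro k
    induction k with
    | zero => simp [Lmap_succ_apply, Lmap, hM1]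
    | succ k ih =>
      rw [Lmap_succ_apply, ih]
      have h := hMk (k + 2) (by omega)
      norm_num at h
      rw [show k + 1 + 1 = k + 2 from rfl, h]
      exact add_comm _ _
  have h3 : HasSum (fun k => f' (k + 1) S H)
      (fderiv ℝ (exp : Matrix (Fin n) (Fin n) ℝ → Matrix (Fin n) (Fin n) ℝ) S H) := by
    refine (hasSum_nat_add_iff (f := fun m => f' m S H) 1).mpr ?_
    have h0 : f' 0 S H = 0 := by simp [hf', Lmap]
    simpa [h0] using h2
  have heq : (fun k => f' (k + 1) S H)
      = fun k : ℕ => (((k + 1).factorial : ℝ))⁻¹ • M (k + 1) := by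
    funext k
    simp only [hf', ContinuousLinearMap.smul_apply, hLM k]
  rwa [heq] at h3
end
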